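/- Let G be a non-trivial game on n binary players, 0 < q < 1, and D = x^{(1)},…,x^{(m)} a dataset of joint actions. Then the average log-likelihood satisfies L̂(G,q) = (1/m)∑_l log p_{(G,q)}(x^{(l)}) = KL(π̂(G)‖π(G)) − KL(π̂(G)‖q) − n·log 2 (with the convention 0·log 0 = 0 in the Bernoulli KL). Moreover, if 0 < π̂(G) < 1, then over q ∈ (0,1) the function q ↦ L̂(G,q) is maximized exactly at q = π̂(G). -/

import Mathlib

open Finset
open scoped Classical BigOperators

/-- The hypercube `{-1,+1}^n` of joint actions, as a finite set of real vectors. -/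
noncomputable def cube (n : ℕ) : Finset (Fin n → ℝ) :=
  (Finset.univ : Finset (Fin n → Bool)).image (fun s i => if s i then (1 : ℝ) else -1)

/-- The generative-model PMF `p_{(N,q)}(x) = q·1[x∈N]/|N| + (1−q)·1[x∉N]/(2^n − |N|)`. -/
noncomputable def gpmf (n : ℕ) (N : Finset (Fin n → ℝ)) (q : ℝ) (x : Fin n → ℝ) : ℝ :=
  q * (if x ∈ N then 1 else 0) / (N.card : ℝ) +
    (1 - q) * (if x ∉ N then 1 else 0) / ((2 : ℝ) ^ n - (N.card : ℝ))

/-- KL divergence between Bernoulli distributions (with `0 · log 0 = 0`, which holds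
automatically since `Real.log 0 = 0`). -/
noncomputable def klBer (p1 p2 : ℝ) : ℝ :=
  p1 * Real.log (p1 / p2) + (1 - p1) * Real.log ((1 - p1) / (1 - p2))

/-- Empirical proportion of equilibria `π̂(G) = (1/m) ∑_l 1[x^{(l)} ∈ NE(G)]`. -/
noncomputable def piHat (n m : ℕ) (N : Finset (Fin n → ℝ)) (xs : Fin m → Fin n → ℝ) : ℝ :=
  (1 / (m : ℝ)) * ∑ l, (if xs l ∈ N then 1 else 0)

/-- Average log-likelihood `L̂(G,q) = (1/m) ∑_l log p_{(G,q)}(x^{(l)})`. -/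
noncomputable def avgLL (n m : ℕ) (N : Finset (Fin n → ℝ)) (q : ℝ)
    (xs : Fin m → Fin n → ℝ) : ℝ :=
  (1 / (m : ℝ)) * ∑ l, Real.log (gpmf n N q (xs l))

lemma avgLL_eq (n m : ℕ) (hm : 1 ≤ m) (N : Finset (Fin n → ℝ)) (q : ℝ)
    (xs : Fin m → Fin n → ℝ) :
    avgLL n m N q xs = piHat n m N xs * Real.log (q / (N.card : ℝ)) +
      (1 - piHat n m N xs) * Real.log ((1 - q) / ((2 : ℝ) ^ n - (N.card : ℝ))) := by
  have hm0 : (m : ℝ) ≠ 0 := Nat.cast_ne_zero.mpr (by omega)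
  unfold avgLL piHat
  have hterm : ∀ l, Real.log (gpmf n N q (xs l)) =
      (if xs l ∈ N then (1:ℝ) else 0) * Real.log (q / (N.card : ℝ)) +
      (1 - (if xs l ∈ N then (1:ℝ) else 0)) *
        Real.log ((1 - q) / ((2 : ℝ) ^ n - (N.card : ℝ))) := by
    intro l
    by_cases h : xs l ∈ N <;> simp [gpmf, h]
  rw [Finset.sum_congr rfl fun l _ => hterm l]
  rw [Finset.sum_add_distrib, ← Finset.sum_mul, ← Finset.sum_mul, Finset.sum_sub_distrib]
  simp only [Finset.sum_const, Finset.card_univ, Fintype.card_fin, nsmul_eq_mul, mul_one]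
  field_simp

lemma kl_identity (n : ℕ) (A q p : ℝ) (hA : 0 < A) (hB : A < 2 ^ n)
    (hq : 0 < q) (hq1 : q < 1) :
    p * Real.log (q / A) + (1 - p) * Real.log ((1 - q) / ((2:ℝ) ^ n - A)) =
      klBer p (A / 2 ^ n) - klBer p q - (n : ℝ) * Real.log 2 := by
  have h2 : (0:ℝ) < 2 ^ n := by positivity
  have hB' : (0:ℝ) < 2 ^ n - A := by linarith
  have h1 : 1 - A / 2 ^ n = ((2:ℝ) ^ n - A) / 2 ^ n := by field_simp
  have hlog2 : Real.log ((2:ℝ) ^ n) = n * Real.log 2 := by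
    rw [Real.log_pow]
  unfold klBer
  rw [h1]
  rcases eq_or_ne p 0 with hp | hp
  · subst hp
    have h0 : (1:ℝ) - 0 = 1 := by norm_num
    have hq' : (1:ℝ) - q ≠ 0 := by linarith
    rw [h0, Real.log_div hq' hB'.ne',
      Real.log_div one_ne_zero (div_pos hB' h2).ne',
      Real.log_div hB'.ne' h2.ne',
      Real.log_div one_ne_zero hq', Real.log_one, hlog2]
    ring
  rcases eq_or_ne p 1 with hp1 | hp1
  · subst hp1
    rw [Real.log_div hq.ne' hA.ne', Real.log_div one_ne_zero hq.ne',
      Real.log_div one_ne_zero (div_pos hA h2).ne',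
      Real.log_div hA.ne' h2.ne', hlog2]
    simp; ring
  have hp1' : 1 - p ≠ 0 := by
    intro h; apply hp1; linarith [sub_eq_zero.mp h]
  rw [Real.log_div hq.ne' hA.ne', Real.log_div (by linarith : (1:ℝ)-q ≠ 0) hB'.ne',
    Real.log_div hp (div_pos hA h2).ne', Real.log_div hp hq.ne',
    Real.log_div hp1' (div_pos hB' h2).ne', Real.log_div hp1' (by linarith : (1:ℝ)-q ≠ 0),
    Real.log_div hA.ne' h2.ne', Real.log_div hB'.ne' h2.ne', hlog2]
  ring

lemma gibbs {p q : ℝ} (hp : 0 < p) (hp1 : p < 1) (hq : 0 < q) (hq1 : q < 1) (hne : q ≠ p) :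
    p * (Real.log q - Real.log p) + (1 - p) * (Real.log (1 - q) - Real.log (1 - p)) < 0 := by
  have h1p : (0:ℝ) < 1 - p := by linarith
  have h1q : (0:ℝ) < 1 - q := by linarith
  have e1 : Real.log q - Real.log p = Real.log (q / p) := (Real.log_div hq.ne' hp.ne').symm
  have e2 : Real.log (1 - q) - Real.log (1 - p) = Real.log ((1-q)/(1-p)) :=
    (Real.log_div h1q.ne' h1p.ne').symm
  rw [e1, e2]
  have l1 : Real.log (q / p) < q / p - 1 :=
    Real.log_lt_sub_one_of_pos (div_pos hq hp) (by
      intro h; exact hne (by field_simp [hp.ne'] at h; exact h))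
  have l2 : Real.log ((1-q)/(1-p)) ≤ (1-q)/(1-p) - 1 :=
    Real.log_le_sub_one_of_pos (div_pos h1q h1p)
  have c1 : p * Real.log (q / p) < p * (q / p - 1) := by
    exact mul_lt_mul_of_pos_left l1 hp
  have c2 : (1 - p) * Real.log ((1-q)/(1-p)) ≤ (1 - p) * ((1-q)/(1-p) - 1) :=
    mul_le_mul_of_nonneg_left l2 h1p.le
  have e3 : p * (q / p - 1) = q - p := by field_simp
  have e4 : (1 - p) * ((1-q)/(1-p) - 1) = p - q := by field_simp; ring
  linarith

/-- the average log-likelihood equals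
`KL(π̂‖π) − KL(π̂‖q) − n log 2`, and if `0 < π̂ < 1` then over `q ∈ (0,1)` it is
maximized exactly at `q = π̂`. -/
theorem stmt2 (n m : ℕ) (hm : 1 ≤ m) (N : Finset (Fin n → ℝ)) (hsub : N ⊆ cube n)
    (hpos : 0 < N.card) (hlt : N.card < 2 ^ n)
    (xs : Fin m → Fin n → ℝ) (hxs : ∀ l, xs l ∈ cube n) :
    (∀ q : ℝ, 0 < q → q < 1 →
      avgLL n m N q xs =
        klBer (piHat n m N xs) ((N.card : ℝ) / 2 ^ n) - klBer (piHat n m N xs) q -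
          (n : ℝ) * Real.log 2) ∧
    (0 < piHat n m N xs → piHat n m N xs < 1 →
      ∀ q : ℝ, 0 < q → q < 1 →
        avgLL n m N q xs ≤ avgLL n m N (piHat n m N xs) xs ∧
          (avgLL n m N q xs = avgLL n m N (piHat n m N xs) xs → q = piHat n m N xs)) := by
  have hA : (0:ℝ) < (N.card : ℝ) := by exact_mod_cast hpos
  have hAlt : (N.card : ℝ) < 2 ^ n := by exact_mod_cast hlt
  constructor
  · intro q hq hq1
    rw [avgLL_eq n m hm N q xs]
    exact kl_identity n (N.card : ℝ) q (piHat n m N xs) hA hAlt hq hq1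
  · intro hp hp1 q hq hq1
    set p := piHat n m N xs with hpdef
    have hB : (0:ℝ) < 2 ^ n - (N.card : ℝ) := by linarith
    have key : ∀ r : ℝ, 0 < r → r < 1 → r ≠ p →
        avgLL n m N r xs < avgLL n m N p xs := by
      intro r hr hr1 hrne
      rw [avgLL_eq n m hm N r xs, avgLL_eq n m hm N p xs]
      have h1r : (0:ℝ) < 1 - r := by linarith
      have h1p : (0:ℝ) < 1 - p := by linarith
      rw [Real.log_div hr.ne' hA.ne', Real.log_div hp.ne' hA.ne',
        Real.log_div h1r.ne' hB.ne', Real.log_div h1p.ne' hB.ne']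
      nlinarith [gibbs hp hp1 hr hr1 hrne]
    by_cases hqp : q = p
    · subst hqp; exact ⟨le_refl _, fun _ => rfl⟩
    · have := key q hq hq1 hqp
      exact ⟨this.le, fun h => absurd h this.ne⟩
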